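/- Let A be a real symmetric 2n×2n matrix, H(x) := ½⟨Ax,x⟩ − 1, and fix η ∈ ℝ. Consider the set 𝒩 := {x ∈ ℝ^{2n} : H(x) = 0 and exp(η𝕁_n A)x = x}. Then for every p ∈ 𝒩, the tangent cone of 𝒩 at p equals the linear subspace {ξ ∈ ℝ^{2n} : ⟨Ap, ξ⟩ = 0 and exp(η𝕁_n A)ξ = ξ}. (This expresses that the closed orbits of the Hamiltonian flow φ^t(x) = exp(t𝕁_n A)x on Σ = H^{−1}(0) are of Morse–Bott type: 𝒩 is a submanifold with tangent space ker(dH_p) ∩ ker(Dφ^η − Id).) -/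

import Mathlib

open Matrix Filter

/-- The standard complex structure `𝕁_m` on `ℝ^{2m} = ℝ^m × ℝ^m`, as a block matrix
`[[0, I], [−I, 0]]`. -/
noncomputable def Jmat (m : ℕ) : Matrix (Fin m ⊕ Fin m) (Fin m ⊕ Fin m) ℝ :=
  Matrix.fromBlocks 0 1 (-1) 0

/-- The tangent cone of a set `S ⊆ E` at `p ∈ S`: the set of vectors `ξ` for which there are
`x_i ∈ S` with `x_i → p` and positive reals `c_i → ∞` with `c_i (x_i − p) → ξ`. -/
def tangentCone' {E : Type*} [NormedAddCommGroup E] [NormedSpace ℝ E]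
    (S : Set E) (p : E) : Set E :=
  {ξ | ∃ (x : ℕ → E) (c : ℕ → ℝ), (∀ i, x i ∈ S) ∧ Tendsto x atTop (nhds p) ∧
    (∀ i, 0 < c i) ∧ Tendsto c atTop atTop ∧
    Tendsto (fun i => c i • (x i - p)) atTop (nhds ξ)}

set_option maxHeartbeats 1000000 in
private lemma key_stmt13  (n : ℕ) (A M : Matrix (Fin n ⊕ Fin n) (Fin n ⊕ Fin n) ℝ)
    (hA : Aᵀ = A) (p : (Fin n ⊕ Fin n) → ℝ)
    (hp1 : A.mulVec p ⬝ᵥ p = 2) (hpM : M.mulVec p = p) :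
    tangentCone' {x | (1 / 2) * (A.mulVec x ⬝ᵥ x) - 1 = 0 ∧ M.mulVec x = x} p
      = {ξ | A.mulVec p ⬝ᵥ ξ = 0 ∧ M.mulVec ξ = ξ} := by
  have hsymm : ∀ v w, A *ᵥ v ⬝ᵥ w = A *ᵥ w ⬝ᵥ v := by
    intro v w
    conv_lhs => rw [← hA]
    rw [Matrix.mulVec_transpose, ← Matrix.dotProduct_mulVec, dotProduct_comm]
  ext ξ
  constructor
  · rintro ⟨x, c, hxS, hx, hcpos, hc, hd⟩
    constructor
    · -- ⟨Ap, ξ⟩ = 0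
      have h0 : ∀ i, A *ᵥ (x i + p) ⬝ᵥ (c i • (x i - p)) = 0 := by
        intro i
        have h1 : A *ᵥ (x i) ⬝ᵥ (x i) = 2 := by have := (hxS i).1; linarith
        have h2 := hsymm (x i) p
        simp only [Matrix.mulVec_add, add_dotProduct, dotProduct_smul,
          dotProduct_sub, smul_eq_mul]
        rw [h1, hp1, h2]
        ring
      have hlim : Tendsto (fun i => A *ᵥ (x i + p) ⬝ᵥ (c i • (x i - p))) atTop
          (nhds (A *ᵥ (p + p) ⬝ᵥ ξ)) := by
        simp only [dotProduct, Matrix.mulVec]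
        apply tendsto_finset_sum
        intro j _
        apply Tendsto.mul
        · apply tendsto_finset_sum
          intro k _
          apply Tendsto.const_mul
          apply Tendsto.add _ tendsto_const_nhds
          exact (continuous_apply k).continuousAt.tendsto.comp hx
        · exact (continuous_apply j).continuousAt.tendsto.comp hd
      simp only [h0] at hlim
      have h4 : (0:ℝ) = A *ᵥ (p + p) ⬝ᵥ ξ := by simpa using hlim
      have h5 : A *ᵥ (p + p) ⬝ᵥ ξ = 2 * (A *ᵥ p ⬝ᵥ ξ) := by
        simp only [Matrix.mulVec_add, add_dotProduct]; ring
      rw [h5] at h4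
      linarith [h4]
    · -- Mξ = ξ
      have h5 : ∀ i, M *ᵥ (c i • (x i - p)) = c i • (x i - p) := by
        intro i
        rw [Matrix.mulVec_smul, Matrix.mulVec_sub, (hxS i).2, hpM]
      have hlim : Tendsto (fun i => M *ᵥ (c i • (x i - p))) atTop (nhds (M *ᵥ ξ)) := by
        rw [tendsto_pi_nhds]
        intro j
        simp only [Matrix.mulVec, dotProduct]
        apply tendsto_finset_sum
        intro k _
        exact Tendsto.const_mul _ ((continuous_apply k).continuousAt.tendsto.comp hd)
      simp only [h5] at hlim
      exact tendsto_nhds_unique hlim hd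
  · rintro ⟨hξ1, hξ2⟩
    have hsp : A *ᵥ ξ ⬝ᵥ p = 0 := by rw [hsymm]; exact hξ1
    set a : ℝ := A *ᵥ ξ ⬝ᵥ ξ with ha
    set ε : ℝ := 1 / (|a| + 1) with hε
    have hε0 : 0 < ε := by positivity
    have hεe : ε * (|a| + 1) = 1 := by rw [hε]; field_simp
    set t : ℕ → ℝ := fun i => ε / (i + 1) with ht
    have ht0 : ∀ i, 0 < t i := fun i => by positivity
    have htle : ∀ i, t i ≤ ε := by
      intro i
      apply div_le_self hε0.le
      have : (0:ℝ) ≤ (i:ℝ) := Nat.cast_nonneg i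
      linarith
    have hq1 : ∀ i, 1 ≤ 2 + a * t i ^ 2 := by
      intro i
      have h4 : t i * t i ≤ ε * t i := mul_le_mul_of_nonneg_right (htle i) (ht0 i).le
      have h5 : |a| * (t i * t i) ≤ |a| * (ε * t i) :=
        mul_le_mul_of_nonneg_left h4 (abs_nonneg a)
      have h6 : |a| * ε = 1 - ε := by linarith [hεe]
      have h7 : (1 - ε) * t i ≤ 1 * t i := by
        apply mul_le_mul_of_nonneg_right _ (ht0 i).le
        linarith
      have h8 : |a| * (t i * t i) ≤ t i := by
        calc |a| * (t i * t i) ≤ |a| * (ε * t i) := h5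
          _ = (|a| * ε) * t i := by ring
          _ = (1 - ε) * t i := by rw [h6]
          _ ≤ 1 * t i := h7
          _ = t i := one_mul _
      have h9 : t i ≤ 1 := by
        have hε1 : ε ≤ 1 := by nlinarith [abs_nonneg a, hεe, hε0]
        linarith [htle i]
      nlinarith [neg_abs_le a, sq_nonneg (t i), h8, h9, abs_nonneg a]
    have hq0 : ∀ i, 0 < 2 + a * t i ^ 2 := fun i => by linarith [hq1 i]
    set r : ℕ → ℝ := fun i => Real.sqrt (2 / (2 + a * t i ^ 2)) with hrdef
    have hrnn : ∀ i, 0 ≤ r i := fun i => Real.sqrt_nonneg _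
    have hr2 : ∀ i, r i ^ 2 = 2 / (2 + a * t i ^ 2) := fun i =>
      Real.sq_sqrt (by have := hq0 i; positivity)
    set x : ℕ → ((Fin n ⊕ Fin n) → ℝ) := fun i => r i • (p + t i • ξ) with hxdef
    set c : ℕ → ℝ := fun i => ((i : ℝ) + 1) / ε with hcdef
    have hc0 : ∀ i, 0 < c i := fun i => by positivity
    have hct : ∀ i, c i * t i = 1 := by
      intro i
      rw [hcdef, ht]
      have h1 : ((i:ℝ) + 1) ≠ 0 := by positivity
      field_simp
    -- membership
    have hmem : ∀ i, x i ∈ {x | (1 / 2) * (A.mulVec x ⬝ᵥ x) - 1 = 0 ∧ M.mulVec x = x} := by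
      intro i
      constructor
      · have hAxx : A *ᵥ x i ⬝ᵥ x i = 2 := by
          have hq := (hq0 i).ne'
          have hrr : r i ^ 2 * (2 + a * t i ^ 2) = 2 := by
            rw [hr2 i]; field_simp
          simp only [hxdef, Matrix.mulVec_smul, Matrix.mulVec_add, smul_dotProduct,
            dotProduct_smul, add_dotProduct, dotProduct_add,
            smul_eq_mul]
          rw [hp1, hξ1, hsp, ← ha]
          nlinarith [hrr]
        simp only [Set.mem_setOf_eq, hAxx]
        norm_num
      · simp only [hxdef, Matrix.mulVec_smul, Matrix.mulVec_add, hpM, hξ2]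
    -- r i → 1
    have hrb : ∀ i, |r i - 1| ≤ |a| * t i ^ 2 := by
      intro i
      have hpos : (0:ℝ) ≤ r i + 1 := by linarith [hrnn i]
      have h1 : |r i ^ 2 - 1| = |r i - 1| * (r i + 1) := by
        rw [show r i ^ 2 - 1 = (r i - 1) * (r i + 1) by ring, abs_mul, abs_of_nonneg hpos]
      have h2 : |r i - 1| ≤ |r i ^ 2 - 1| := by
        rw [h1]; nlinarith [abs_nonneg (r i - 1), hrnn i]
      have h3 : r i ^ 2 - 1 = -(a * t i ^ 2) / (2 + a * t i ^ 2) := by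
        rw [eq_div_iff (hq0 i).ne', hr2 i, sub_mul, div_mul_cancel₀ _ (hq0 i).ne']
        ring
      have h4 : |r i ^ 2 - 1| ≤ |a| * t i ^ 2 := by
        rw [h3, abs_div, abs_of_pos (hq0 i), abs_neg, abs_mul,
          abs_of_nonneg (sq_nonneg (t i))]
        exact div_le_self (by positivity) (hq1 i)
      linarith
    have htlim : Tendsto t atTop (nhds 0) := by
      apply Tendsto.div_atTop (tendsto_const_nhds)
      exact tendsto_atTop_add_const_right _ 1 tendsto_natCast_atTop_atTop
    have ht2lim : Tendsto (fun i => |a| * t i ^ 2) atTop (nhds 0) := by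
      have := ((htlim.mul htlim).const_mul |a|)
      simpa [pow_two] using this
    have hrlim : Tendsto r atTop (nhds 1) := by
      have h0 : Tendsto (fun i => r i - 1) atTop (nhds 0) := by
        apply squeeze_zero_norm (fun i => by simpa [Real.norm_eq_abs] using hrb i) ht2lim
      have := h0.add (tendsto_const_nhds :
        Tendsto (fun _ : ℕ => (1:ℝ)) atTop (nhds 1))
      simpa using this
    have hxlim : Tendsto x atTop (nhds p) := by
      have h1 : Tendsto (fun i => p + t i • ξ) atTop (nhds (p + (0:ℝ) • ξ)) :=
        tendsto_const_nhds.add (htlim.smul_const ξ)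
      have := hrlim.smul h1
      simpa [hxdef] using this
    have hclim : Tendsto c atTop atTop := by
      apply Tendsto.atTop_div_const hε0
      exact tendsto_atTop_add_const_right _ 1 tendsto_natCast_atTop_atTop
    -- final limit
    have hxc : ∀ i, c i • (x i - p) = (c i * (r i - 1)) • p + r i • ξ := by
      intro i
      funext j
      have hctl := hct i
      simp only [hxdef, Pi.smul_apply, Pi.sub_apply, Pi.add_apply, smul_eq_mul]
      linear_combination (r i * ξ j) * hctl
    have hcr : Tendsto (fun i => c i * (r i - 1)) atTop (nhds 0) := by
      have hb : ∀ i, ‖c i * (r i - 1)‖ ≤ |a| * t i := by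
        intro i
        rw [Real.norm_eq_abs, abs_mul, abs_of_pos (hc0 i)]
        calc c i * |r i - 1| ≤ c i * (|a| * t i ^ 2) :=
              mul_le_mul_of_nonneg_left (hrb i) (hc0 i).le
          _ = |a| * t i := by
              have h := hct i; linear_combination (|a| * t i) * h
      exact squeeze_zero_norm hb (by simpa using htlim.const_mul |a|)
    have hfinal : Tendsto (fun i => c i • (x i - p)) atTop (nhds ξ) := by
      have h1 := (hcr.smul_const p).add (hrlim.smul_const ξ)
      simp only [zero_smul, one_smul, zero_add] at h1
      simpa only [hxc] using h1
    exact ⟨x, c, hmem, hxlim, hc0, hclim, hfinal⟩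


/-- For `𝒩 = {x : H(x) = 0, exp(η𝕁_nA)x = x}` with
`H(x) = ½⟨Ax,x⟩ − 1`, at every `p ∈ 𝒩` the tangent cone of `𝒩` equals
`{ξ : ⟨Ap, ξ⟩ = 0 and exp(η𝕁_nA)ξ = ξ}` (Morse–Bott property of the closed orbits). -/
theorem stmt_13 (n : ℕ) (A : Matrix (Fin n ⊕ Fin n) (Fin n ⊕ Fin n) ℝ)
    (hA : Aᵀ = A) (η : ℝ)
    (𝒩 : Set ((Fin n ⊕ Fin n) → ℝ))
    (h𝒩 : 𝒩 = {x | (1 / 2) * (A.mulVec x ⬝ᵥ x) - 1 = 0 ∧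
      (NormedSpace.exp (η • (Jmat n * A))).mulVec x = x})
    (p : (Fin n ⊕ Fin n) → ℝ) (hp : p ∈ 𝒩) :
    tangentCone' 𝒩 p =
      {ξ | A.mulVec p ⬝ᵥ ξ = 0 ∧ (NormedSpace.exp (η • (Jmat n * A))).mulVec ξ = ξ} := by
  subst h𝒩
  obtain ⟨hp1, hp2⟩ := hp
  have hp1' : A.mulVec p ⬝ᵥ p = 2 := by linarith
  exact key_stmt13 n A (NormedSpace.exp (η • (Jmat n * A))) hA p hp1' hp2
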